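/- Let ω1, ω3, ω5, ω7 solve the asymmetric center-manifold system with parameters ν > 0 and δ ∈ (√(2/3), √(3/2)), let η > 0 satisfy |δ² − 1| < η, and set A(t) = |ω1(t)|² + |ω3(t)|², B(t) = |ω5(t)|² + |ω7(t)|². Then B is differentiable and satisfies the differential inequality B'(t) ≤ −2ν((1+δ²)/δ²) B(t) + 4√2 (η/δ) A(t) √(B(t)) − (D₀/ν) A(t) B(t) for all t ≥ 0, where D₀ = min( (1+3δ²)/(δ²(1+δ²)(1+4δ²)), δ⁶(3+δ²)/((1+δ²)(4+δ²)) ). -/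

import Mathlib

set_option maxHeartbeats 2000000

lemma deriv_abs_sq {ω : ℝ → ℂ} {d : ℂ} {t : ℝ} (h : HasDerivAt ω d t) :
    HasDerivAt (fun s => ‖ω s‖ ^ 2) (2 * (d * (starRingEnd ℂ) (ω t)).re) t := by
  have hc : HasDerivAt (fun s => (starRingEnd ℂ) (ω s)) ((starRingEnd ℂ) d) t := by
    simpa [Function.comp_def] using (Complex.conjCLE.toContinuousLinearMap.hasFDerivAt.comp_hasDerivAt t h)
  have hm := h.mul hc
  have hre := Complex.reCLM.hasFDerivAt.comp_hasDerivAt t hm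
  simp only [Function.comp_def, Pi.mul_apply, Complex.reCLM_apply] at hre
  have hfun : (fun s => (ω s * (starRingEnd ℂ) (ω s)).re) = fun s => ‖ω s‖ ^ 2 := by
    funext s
    rw [Complex.mul_conj]
    simp [Complex.normSq_eq_norm_sq, ← Complex.ofReal_pow]
  have hval : (d * (starRingEnd ℂ) (ω t) + ω t * (starRingEnd ℂ) d).re
      = 2 * (d * (starRingEnd ℂ) (ω t)).re := by
    have h2 : (ω t * (starRingEnd ℂ) d).re = (d * (starRingEnd ℂ) (ω t)).re := by
      rw [← Complex.conj_re (ω t * (starRingEnd ℂ) d)]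
      simp [map_mul, mul_comm]
    rw [Complex.add_re, h2]; ring
  rw [hfun, hval] at hre
  exact hre



/-- For the asymmetric center-manifold system with ν > 0,
δ ∈ (√(2/3), √(3/2)) and |δ² − 1| < η, the high-mode energy B(t) = |ω5|² + |ω7|² is
differentiable and satisfies B' ≤ −2ν((1+δ²)/δ²)B + 4√2 (η/δ) A √B − (D₀/ν) A B,
where D₀ = min((1+3δ²)/(δ²(1+δ²)(1+4δ²)), δ⁶(3+δ²)/((1+δ²)(4+δ²))). -/
theorem B_differential_inequality
    (ν δ η : ℝ) (hν : 0 < ν) (hη : 0 < η)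
    (hδ1 : Real.sqrt (2 / 3) < δ) (hδ2 : δ < Real.sqrt (3 / 2))
    (hδη : |δ ^ 2 - 1| < η)
    (ω1 ω3 ω5 ω7 : ℝ → ℂ)
    (h1 : ∀ t : ℝ, 0 ≤ t → HasDerivAt ω1
      (-((ν / δ ^ 2 : ℝ) : ℂ) * ω1 t
        + ((1 / (δ * (1 + δ ^ 2)) : ℝ) : ℂ) * (ω3 t * ω7 t - (starRingEnd ℂ) (ω3 t) * ω5 t)
        + ((3 * δ ^ 6 / (2 * ν * (4 + δ ^ 2) * (1 + δ ^ 2) ^ 2) : ℝ) : ℂ) * ω1 t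
            * ((‖ω5 t‖ ^ 2 + ‖ω7 t‖ ^ 2 : ℝ) : ℂ)) t)
    (h3 : ∀ t : ℝ, 0 ≤ t → HasDerivAt ω3
      (-(ν : ℂ) * ω3 t
        + ((δ ^ 3 / (1 + δ ^ 2) : ℝ) : ℂ) * ((starRingEnd ℂ) (ω1 t) * ω5 t - ω1 t * (starRingEnd ℂ) (ω7 t))
        + ((3 * δ ^ 2 / (2 * ν * (1 + 4 * δ ^ 2) * (1 + δ ^ 2) ^ 2) : ℝ) : ℂ) * ω3 t
            * ((‖ω5 t‖ ^ 2 + ‖ω7 t‖ ^ 2 : ℝ) : ℂ)) t)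
    (h5 : ∀ t : ℝ, 0 ≤ t → HasDerivAt ω5
      (-((ν * (1 + δ ^ 2) / δ ^ 2 : ℝ) : ℂ) * ω5 t
        - (((δ ^ 2 - 1) / δ : ℝ) : ℂ) * ω1 t * ω3 t
        - ((δ ^ 6 * (3 + δ ^ 2) / (2 * ν * (4 + δ ^ 2) * (1 + δ ^ 2)) : ℝ) : ℂ) * ω5 t
            * ((‖ω1 t‖ ^ 2 : ℝ) : ℂ)
        - (((1 + 3 * δ ^ 2) / (2 * ν * δ ^ 2 * (1 + 4 * δ ^ 2) * (1 + δ ^ 2)) : ℝ) : ℂ) * ω5 t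
            * ((‖ω3 t‖ ^ 2 : ℝ) : ℂ)) t)
    (h7 : ∀ t : ℝ, 0 ≤ t → HasDerivAt ω7
      (-((ν * (1 + δ ^ 2) / δ ^ 2 : ℝ) : ℂ) * ω7 t
        + (((δ ^ 2 - 1) / δ : ℝ) : ℂ) * ω1 t * (starRingEnd ℂ) (ω3 t)
        - ((δ ^ 6 * (3 + δ ^ 2) / (2 * ν * (4 + δ ^ 2) * (1 + δ ^ 2)) : ℝ) : ℂ) * ω7 t
            * ((‖ω1 t‖ ^ 2 : ℝ) : ℂ)
        - (((1 + 3 * δ ^ 2) / (2 * ν * δ ^ 2 * (1 + 4 * δ ^ 2) * (1 + δ ^ 2)) : ℝ) : ℂ) * ω7 t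
            * ((‖ω3 t‖ ^ 2 : ℝ) : ℂ)) t)
    :
    ∀ t : ℝ, 0 ≤ t →
      ∃ b' : ℝ,
        HasDerivAt (fun s => ‖ω5 s‖ ^ 2 + ‖ω7 s‖ ^ 2) b' t
        ∧ b' ≤ -2 * ν * ((1 + δ ^ 2) / δ ^ 2) * (‖ω5 t‖ ^ 2 + ‖ω7 t‖ ^ 2)
            + 4 * Real.sqrt 2 * (η / δ) * (‖ω1 t‖ ^ 2 + ‖ω3 t‖ ^ 2)
                * Real.sqrt (‖ω5 t‖ ^ 2 + ‖ω7 t‖ ^ 2)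
            - (min ((1 + 3 * δ ^ 2) / (δ ^ 2 * (1 + δ ^ 2) * (1 + 4 * δ ^ 2)))
                  (δ ^ 6 * (3 + δ ^ 2) / ((1 + δ ^ 2) * (4 + δ ^ 2))) / ν)
                * (‖ω1 t‖ ^ 2 + ‖ω3 t‖ ^ 2)
                * (‖ω5 t‖ ^ 2 + ‖ω7 t‖ ^ 2) := by
  intro t ht
  have hδ0 : 0 < δ := lt_of_le_of_lt (Real.sqrt_nonneg (2/3)) hδ1
  have hν' : ν ≠ 0 := ne_of_gt hν
  have hδ' : δ ≠ 0 := ne_of_gt hδ0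
  have h1δ : (1 + δ ^ 2) ≠ 0 := by positivity
  have h4δ : (4 + δ ^ 2) ≠ 0 := by positivity
  have h14δ : (1 + 4 * δ ^ 2) ≠ 0 := by positivity
  have hd5 := deriv_abs_sq (h5 t ht)
  have hd7 := deriv_abs_sq (h7 t ht)
  refine ⟨_, hd5.add hd7, ?_⟩
  have e5 : 2 * ((-((ν * (1 + δ ^ 2) / δ ^ 2 : ℝ) : ℂ) * ω5 t
        - (((δ ^ 2 - 1) / δ : ℝ) : ℂ) * ω1 t * ω3 t
        - ((δ ^ 6 * (3 + δ ^ 2) / (2 * ν * (4 + δ ^ 2) * (1 + δ ^ 2)) : ℝ) : ℂ) * ω5 t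
            * ((‖ω1 t‖ ^ 2 : ℝ) : ℂ)
        - (((1 + 3 * δ ^ 2) / (2 * ν * δ ^ 2 * (1 + 4 * δ ^ 2) * (1 + δ ^ 2)) : ℝ) : ℂ) * ω5 t
            * ((‖ω3 t‖ ^ 2 : ℝ) : ℂ)) * (starRingEnd ℂ) (ω5 t)).re
      = -2 * (ν * (1 + δ ^ 2) / δ ^ 2) * ‖ω5 t‖ ^ 2
        - 2 * ((δ ^ 2 - 1) / δ) * (ω1 t * ω3 t * (starRingEnd ℂ) (ω5 t)).re
        - 2 * (δ ^ 6 * (3 + δ ^ 2) / (2 * ν * (4 + δ ^ 2) * (1 + δ ^ 2)))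
            * ‖ω1 t‖ ^ 2 * ‖ω5 t‖ ^ 2
        - 2 * ((1 + 3 * δ ^ 2) / (2 * ν * δ ^ 2 * (1 + 4 * δ ^ 2) * (1 + δ ^ 2)))
            * ‖ω3 t‖ ^ 2 * ‖ω5 t‖ ^ 2 := by
    simp only [Complex.sq_norm, Complex.normSq_apply, Complex.mul_re, Complex.mul_im,
      Complex.sub_re, Complex.sub_im, Complex.add_re, Complex.add_im, Complex.neg_re,
      Complex.neg_im, Complex.ofReal_re, Complex.ofReal_im, Complex.conj_re, Complex.conj_im]
    ring
  have e7 : 2 * ((-((ν * (1 + δ ^ 2) / δ ^ 2 : ℝ) : ℂ) * ω7 t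
        + (((δ ^ 2 - 1) / δ : ℝ) : ℂ) * ω1 t * (starRingEnd ℂ) (ω3 t)
        - ((δ ^ 6 * (3 + δ ^ 2) / (2 * ν * (4 + δ ^ 2) * (1 + δ ^ 2)) : ℝ) : ℂ) * ω7 t
            * ((‖ω1 t‖ ^ 2 : ℝ) : ℂ)
        - (((1 + 3 * δ ^ 2) / (2 * ν * δ ^ 2 * (1 + 4 * δ ^ 2) * (1 + δ ^ 2)) : ℝ) : ℂ) * ω7 t
            * ((‖ω3 t‖ ^ 2 : ℝ) : ℂ)) * (starRingEnd ℂ) (ω7 t)).re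
      = -2 * (ν * (1 + δ ^ 2) / δ ^ 2) * ‖ω7 t‖ ^ 2
        + 2 * ((δ ^ 2 - 1) / δ) * (ω1 t * (starRingEnd ℂ) (ω3 t) * (starRingEnd ℂ) (ω7 t)).re
        - 2 * (δ ^ 6 * (3 + δ ^ 2) / (2 * ν * (4 + δ ^ 2) * (1 + δ ^ 2)))
            * ‖ω1 t‖ ^ 2 * ‖ω7 t‖ ^ 2
        - 2 * ((1 + 3 * δ ^ 2) / (2 * ν * δ ^ 2 * (1 + 4 * δ ^ 2) * (1 + δ ^ 2)))
            * ‖ω3 t‖ ^ 2 * ‖ω7 t‖ ^ 2 := by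
    simp only [Complex.sq_norm, Complex.normSq_apply, Complex.mul_re, Complex.mul_im,
      Complex.sub_re, Complex.sub_im, Complex.add_re, Complex.add_im, Complex.neg_re,
      Complex.neg_im, Complex.ofReal_re, Complex.ofReal_im, Complex.conj_re, Complex.conj_im]
    ring
  rw [e5, e7]
  -- abbreviations
  have hX5abs : |(ω1 t * ω3 t * (starRingEnd ℂ) (ω5 t)).re|
      ≤ ‖ω1 t‖ * ‖ω3 t‖ * ‖ω5 t‖ := by
    refine (Complex.abs_re_le_norm _).trans ?_
    rw [norm_mul, norm_mul, Complex.norm_conj]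
  have hX7abs : |(ω1 t * (starRingEnd ℂ) (ω3 t) * (starRingEnd ℂ) (ω7 t)).re|
      ≤ ‖ω1 t‖ * ‖ω3 t‖ * ‖ω7 t‖ := by
    refine (Complex.abs_re_le_norm _).trans ?_
    rw [norm_mul, norm_mul, Complex.norm_conj, Complex.norm_conj]
  set r1 := ‖ω1 t‖ with hr1d
  set r3 := ‖ω3 t‖ with hr3d
  set r5 := ‖ω5 t‖ with hr5d
  set r7 := ‖ω7 t‖ with hr7d
  set X5 := (ω1 t * ω3 t * (starRingEnd ℂ) (ω5 t)).re with hX5d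
  set X7 := (ω1 t * (starRingEnd ℂ) (ω3 t) * (starRingEnd ℂ) (ω7 t)).re with hX7d
  set s := Real.sqrt (r5 ^ 2 + r7 ^ 2) with hsd
  have hr1n : 0 ≤ r1 := by rw [hr1d]; exact norm_nonneg _
  have hr3n : 0 ≤ r3 := by rw [hr3d]; exact norm_nonneg _
  have hr5n : 0 ≤ r5 := by rw [hr5d]; exact norm_nonneg _
  have hr7n : 0 ≤ r7 := by rw [hr7d]; exact norm_nonneg _
  have hs0 : 0 ≤ s := by rw [hsd]; exact Real.sqrt_nonneg _
  have h57 : r5 + r7 ≤ Real.sqrt 2 * s := by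
    rw [hsd, ← Real.sqrt_mul (by norm_num : (0:ℝ) ≤ 2)]
    have h' : r5 + r7 = Real.sqrt ((r5 + r7) ^ 2) :=
      (Real.sqrt_sq (by linarith)).symm
    rw [h']
    exact Real.sqrt_le_sqrt (by nlinarith [sq_nonneg (r5 - r7)])
  have hkabs : |(δ ^ 2 - 1) / δ| ≤ η / δ := by
    rw [abs_div, abs_of_pos hδ0]
    gcongr
  have hηδ : 0 ≤ η / δ := div_nonneg hη.le hδ0.le
  have a5 : -(((δ ^ 2 - 1) / δ) * X5) ≤ (η / δ) * (r1 * r3 * r5) := by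
    calc -(((δ ^ 2 - 1) / δ) * X5) ≤ |((δ ^ 2 - 1) / δ) * X5| := neg_le_abs _
    _ = |(δ ^ 2 - 1) / δ| * |X5| := abs_mul _ _
    _ ≤ (η / δ) * (r1 * r3 * r5) :=
        mul_le_mul hkabs hX5abs (abs_nonneg _) hηδ
  have a7 : ((δ ^ 2 - 1) / δ) * X7 ≤ (η / δ) * (r1 * r3 * r7) := by
    calc ((δ ^ 2 - 1) / δ) * X7 ≤ |((δ ^ 2 - 1) / δ) * X7| := le_abs_self _
    _ = |(δ ^ 2 - 1) / δ| * |X7| := abs_mul _ _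
    _ ≤ (η / δ) * (r1 * r3 * r7) :=
        mul_le_mul hkabs hX7abs (abs_nonneg _) hηδ
  have hb : (η / δ) * (r1 * r3 * r5) + (η / δ) * (r1 * r3 * r7)
      ≤ Real.sqrt 2 * (η / δ) * (r1 ^ 2 + r3 ^ 2) * s := by
    have e1 : (η / δ) * (r1 * r3 * r5) + (η / δ) * (r1 * r3 * r7)
        = (η / δ) * (r1 * r3) * (r5 + r7) := by ring
    rw [e1]
    have h2 : (η / δ) * (r1 * r3) * (r5 + r7) ≤ (η / δ) * (r1 * r3) * (Real.sqrt 2 * s) :=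
      mul_le_mul_of_nonneg_left h57 (mul_nonneg hηδ (mul_nonneg hr1n hr3n))
    refine h2.trans ?_
    have h3 : r1 * r3 ≤ r1 ^ 2 + r3 ^ 2 := by nlinarith [sq_nonneg (r1 - r3)]
    have h4 := mul_le_mul_of_nonneg_right h3
      (mul_nonneg (mul_nonneg hηδ (Real.sqrt_nonneg 2)) hs0)
    nlinarith [h4]
  have hpos : 0 ≤ Real.sqrt 2 * (η / δ) * (r1 ^ 2 + r3 ^ 2) * s :=
    mul_nonneg (mul_nonneg (mul_nonneg (Real.sqrt_nonneg 2) hηδ) (by positivity)) hs0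
  have hint : -2 * ((δ ^ 2 - 1) / δ) * X5 + 2 * ((δ ^ 2 - 1) / δ) * X7
      ≤ 4 * Real.sqrt 2 * (η / δ) * (r1 ^ 2 + r3 ^ 2) * s := by
    nlinarith [a5, a7, hb, hpos]
  have base1 : min ((1 + 3 * δ ^ 2) / (δ ^ 2 * (1 + δ ^ 2) * (1 + 4 * δ ^ 2)))
      (δ ^ 6 * (3 + δ ^ 2) / ((1 + δ ^ 2) * (4 + δ ^ 2))) / ν
      ≤ 2 * (δ ^ 6 * (3 + δ ^ 2) / (2 * ν * (4 + δ ^ 2) * (1 + δ ^ 2))) := by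
    have heq : 2 * (δ ^ 6 * (3 + δ ^ 2) / (2 * ν * (4 + δ ^ 2) * (1 + δ ^ 2)))
        = (δ ^ 6 * (3 + δ ^ 2) / ((1 + δ ^ 2) * (4 + δ ^ 2))) / ν := by
      field_simp
    rw [heq]
    gcongr
    exact min_le_right _ _
  have base3 : min ((1 + 3 * δ ^ 2) / (δ ^ 2 * (1 + δ ^ 2) * (1 + 4 * δ ^ 2)))
      (δ ^ 6 * (3 + δ ^ 2) / ((1 + δ ^ 2) * (4 + δ ^ 2))) / ν
      ≤ 2 * ((1 + 3 * δ ^ 2) / (2 * ν * δ ^ 2 * (1 + 4 * δ ^ 2) * (1 + δ ^ 2))) := by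
    have heq : 2 * ((1 + 3 * δ ^ 2) / (2 * ν * δ ^ 2 * (1 + 4 * δ ^ 2) * (1 + δ ^ 2)))
        = ((1 + 3 * δ ^ 2) / (δ ^ 2 * (1 + δ ^ 2) * (1 + 4 * δ ^ 2))) / ν := by
      field_simp
    rw [heq]
    gcongr
    exact min_le_left _ _
  have t1 := mul_le_mul_of_nonneg_right base1
    (by positivity : (0:ℝ) ≤ r1 ^ 2 * (r5 ^ 2 + r7 ^ 2))
  have t3 := mul_le_mul_of_nonneg_right base3
    (by positivity : (0:ℝ) ≤ r3 ^ 2 * (r5 ^ 2 + r7 ^ 2))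
  ring_nf at hint t1 t3 ⊢
  linarith [hint, t1, t3]
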